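/- With d, p, q, the cone C, and G_f as in the context, set ρ_q = (dp + dq + 2(d-1))/2, and suppose f : C → ℂ is continuous, homogeneous of degree zero, and satisfies: for every M ∈ ℕ there is a constant C_M such that |f(x)| ≤ C_M (1+|x|)^{-ρ_q} (1 + log(1+|x|²))^{-M} whenever Q(x) = -1. Then for every M ∈ ℕ there is a constant C'_M such that |G_f(t₁,t₂,t₃)| ≤ C'_M (t₂² + t₃²)^{-d(q-p)/4} (1 + log(t₂² + t₃²))^{-M} for all (t₁,t₂,t₃) with t₁² - t₂² - t₃² = -1. -/

import Mathlib

open MeasureTheory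

/-- Points of `ℝⁿ`, `n = d(p+q+2)`, written as
`x = (a, w₁, u, u', y, w₂, b) ∈ ℝ × ℝ^{d-1} × ℝ^{dp} × ℝ^{dp} × ℝ^{d(q-p)} × ℝ^{d-1} × ℝ`. -/
abbrev HypPoint (d p q : ℕ) :=
  ℝ × (Fin (d - 1) → ℝ) × (Fin (d * p) → ℝ) × (Fin (d * p) → ℝ) ×
    (Fin (d * (q - p)) → ℝ) × (Fin (d - 1) → ℝ) × ℝ

/-- The quadratic form `Q(x) = a² + |w₁|² + |u|² - |u'|² - |y|² - |w₂|² - b²`. -/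
def Qform {d p q : ℕ} (x : HypPoint d p q) : ℝ :=
  x.1 ^ 2 + (∑ i, x.2.1 i ^ 2) + (∑ i, x.2.2.1 i ^ 2) - (∑ i, x.2.2.2.1 i ^ 2) -
    (∑ i, x.2.2.2.2.1 i ^ 2) - (∑ i, x.2.2.2.2.2.1 i ^ 2) - x.2.2.2.2.2.2 ^ 2

/-- The Euclidean norm `|x|` of a point `x`. -/
noncomputable def normE {d p q : ℕ} (x : HypPoint d p q) : ℝ :=
  Real.sqrt (x.1 ^ 2 + (∑ i, x.2.1 i ^ 2) + (∑ i, x.2.2.1 i ^ 2) + (∑ i, x.2.2.2.1 i ^ 2) +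
    (∑ i, x.2.2.2.2.1 i ^ 2) + (∑ i, x.2.2.2.2.2.1 i ^ 2) + x.2.2.2.2.2.2 ^ 2)

/-- `G_f(t₁,t₂,t₃) = ∫_{S^{d(q-p)-1}} ∫_{ℝ^{dp}} ∫_{ℝ^{d-1}} f(t₁, w̄, u, -u, t₂v̄, w̄, t₃)
dw̄ du dσ(v̄)`, where `σ` is the surface measure on the unit sphere
`S^{d(q-p)-1} ⊂ ℝ^{d(q-p)}`. -/
noncomputable def Gf {d p q : ℕ} (f : HypPoint d p q → ℂ) (t : ℝ × ℝ × ℝ) : ℂ :=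
  ∫ vb : Metric.sphere (0 : EuclideanSpace ℝ (Fin (d * (q - p)))) 1,
    (∫ u : Fin (d * p) → ℝ, ∫ wb : Fin (d - 1) → ℝ,
      f (t.1, wb, u, -u,
        fun i => t.2.1 * (vb : EuclideanSpace ℝ (Fin (d * (q - p)))) i, wb, t.2.2))
    ∂(volume : Measure (EuclideanSpace ℝ (Fin (d * (q - p))))).toSphere


lemma aux_cont (n : ℕ) (r A : ℝ) (hA : 0 < A) :
    Continuous (fun z : Fin n → ℝ => (A + ∑ i, z i ^ 2) ^ (-r / 2)) := by
  apply Continuous.rpow_const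
  · continuity
  · intro z
    left
    have h : 0 ≤ ∑ i, z i ^ 2 := Finset.sum_nonneg fun i _ => sq_nonneg _
    positivity

lemma aux_sum_nonneg {n : ℕ} (z : Fin n → ℝ) : 0 ≤ ∑ i, z i ^ 2 :=
  Finset.sum_nonneg fun i _ => sq_nonneg _

lemma aux_norm_sq_le {n : ℕ} (z : Fin n → ℝ) : ‖z‖ ^ 2 ≤ ∑ i, z i ^ 2 := by
  rcases isEmpty_or_nonempty (Fin n) with h | h
  · simp [norm_eq_zero.mpr (Subsingleton.elim z 0), aux_sum_nonneg z]
  · have h1 : ‖z‖ ≤ Real.sqrt (∑ i, z i ^ 2) := by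
      apply pi_norm_le_iff_of_nonneg (Real.sqrt_nonneg _) |>.mpr
      intro i
      rw [Real.norm_eq_abs, ← Real.sqrt_sq_eq_abs]
      apply Real.sqrt_le_sqrt
      exact Finset.single_le_sum (fun j _ => sq_nonneg (z j)) (Finset.mem_univ i)
    calc ‖z‖ ^ 2 ≤ Real.sqrt (∑ i, z i ^ 2) ^ 2 := by
          apply pow_le_pow_left₀ (norm_nonneg z) h1
      _ = ∑ i, z i ^ 2 := Real.sq_sqrt (aux_sum_nonneg z)

lemma aux_integrable (n : ℕ) (r : ℝ) (hr : (n : ℝ) < r) (A : ℝ) (hA : 0 < A) :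
    Integrable (fun z : Fin n → ℝ => (A + ∑ i, z i ^ 2) ^ (-r / 2)) := by
  have hr0 : 0 < r := lt_of_le_of_lt (Nat.cast_nonneg n) hr
  have hfin : (Module.finrank ℝ (Fin n → ℝ) : ℝ) < r := by
    rwa [Module.finrank_fin_fun]
  have hint : Integrable (fun z : Fin n → ℝ => (1 + ‖z‖) ^ (-r)) := integrable_one_add_norm hfin
  set c : ℝ := (min A 1 / 2) ^ (-r / 2)
  refine (hint.const_mul c).mono' ((aux_cont n r A hA).aestronglyMeasurable) ?_
  filter_upwards with z
  have h0 : 0 ≤ ∑ i, z i ^ 2 := aux_sum_nonneg z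
  rw [Real.norm_eq_abs, abs_of_nonneg (Real.rpow_nonneg (by positivity) _)]
  have key : min A 1 / 2 * (1 + ‖z‖) ^ 2 ≤ A + ∑ i, z i ^ 2 := by
    have h1 : (1 + ‖z‖) ^ 2 ≤ 2 * (1 + ‖z‖ ^ 2) := by nlinarith [norm_nonneg z, sq_nonneg (1 - ‖z‖)]
    have h2 : min A 1 * (1 + ‖z‖ ^ 2) ≤ A + ∑ i, z i ^ 2 := by
      have := aux_norm_sq_le z
      have hm1 : min A 1 ≤ A := min_le_left _ _
      have hm2 : min A 1 ≤ 1 := min_le_right _ _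
      have hm0 : 0 < min A 1 := lt_min hA one_pos
      nlinarith [norm_nonneg z]
    calc min A 1 / 2 * (1 + ‖z‖) ^ 2 ≤ min A 1 / 2 * (2 * (1 + ‖z‖ ^ 2)) := by
          apply mul_le_mul_of_nonneg_left h1 (by positivity)
      _ = min A 1 * (1 + ‖z‖ ^ 2) := by ring
      _ ≤ A + ∑ i, z i ^ 2 := h2
  calc (A + ∑ i, z i ^ 2) ^ (-r / 2)
      ≤ (min A 1 / 2 * (1 + ‖z‖) ^ 2) ^ (-r / 2) := by
        apply Real.rpow_le_rpow_of_nonpos (by positivity) key (by linarith)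
    _ = c * ((1 + ‖z‖) ^ 2) ^ (-r / 2) := by
        rw [Real.mul_rpow (by positivity) (by positivity)]
    _ = c * (1 + ‖z‖) ^ (-r) := by
        rw [← Real.rpow_natCast (1 + ‖z‖) 2, ← Real.rpow_mul (by positivity),
          show ((2:ℕ):ℝ) * (-r / 2) = -r by push_cast; ring]

lemma aux_scale (n : ℕ) (r : ℝ) (A : ℝ) (hA : 0 < A) :
    (∫ z : Fin n → ℝ, (A + ∑ i, z i ^ 2) ^ (-r / 2)) =
      A ^ (((n : ℝ) - r) / 2) * ∫ z : Fin n → ℝ, ((1 : ℝ) + ∑ i, z i ^ 2) ^ (-r / 2) := by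
  have hc : (0 : ℝ) < Real.sqrt A := Real.sqrt_pos.mpr hA
  have h := MeasureTheory.Measure.integral_comp_smul (volume : Measure (Fin n → ℝ))
    (fun z : Fin n → ℝ => (A + ∑ i, z i ^ 2) ^ (-r / 2)) (Real.sqrt A)
  have h2 : ∀ w : Fin n → ℝ, (A + ∑ i, (Real.sqrt A • w) i ^ 2) ^ (-r / 2)
      = A ^ (-r / 2) * ((1 : ℝ) + ∑ i, w i ^ 2) ^ (-r / 2) := by
    intro w
    have : A + ∑ i, (Real.sqrt A • w) i ^ 2 = A * (1 + ∑ i, w i ^ 2) := by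
      simp only [Pi.smul_apply, smul_eq_mul, mul_pow, ← Finset.mul_sum,
        Real.sq_sqrt hA.le]
      ring
    rw [this, Real.mul_rpow hA.le (by have := aux_sum_nonneg w; positivity)]
  simp only [h2] at h
  rw [integral_const_mul] at h
  have hAn : |((Real.sqrt A ^ Module.finrank ℝ (Fin n → ℝ))⁻¹)| = (A ^ ((n : ℝ) / 2))⁻¹ := by
    rw [Module.finrank_fin_fun, abs_of_nonneg (by positivity)]
    congr 1
    rw [← Real.rpow_natCast (Real.sqrt A) n, Real.rpow_def_of_pos hc,
      Real.log_sqrt hA.le, Real.rpow_def_of_pos hA]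
    ring_nf
  rw [hAn, smul_eq_mul] at h
  have hApow : (0:ℝ) < A ^ ((n : ℝ) / 2) := Real.rpow_pos_of_pos hA _
  field_simp at h
  rw [show ((n:ℝ) - r)/2 = -r/2 + (n:ℝ)/2 by ring, Real.rpow_add hA]
  simp only [neg_div] at h ⊢
  rw [← h]
  ring

set_option maxHeartbeats 2000000 in
/-- Set `ρ_q = (dp + dq + 2(d-1))/2`. If `f` is continuous on the cone `C = {Q < 0}`,
homogeneous of degree zero, and for every `M ∈ ℕ` satisfies
`‖f(x)‖ ≤ C_M (1+|x|)^{-ρ_q} (1 + log(1+|x|²))^{-M}` on `{Q = -1}`, then for every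
`M ∈ ℕ` there is `C'_M` with
`‖G_f(t)‖ ≤ C'_M (t₂²+t₃²)^{-d(q-p)/4} (1 + log(t₂²+t₃²))^{-M}` on `{t₁²-t₂²-t₃² = -1}`. -/
theorem Gf_decay (d p q : ℕ) (hd : d = 1 ∨ d = 2 ∨ d = 4) (hpq : p < q)
    (f : HypPoint d p q → ℂ)
    (hcont : ContinuousOn f {x | Qform x < 0})
    (hhom : ∀ (lam : ℝ), lam ≠ 0 → ∀ x : HypPoint d p q, Qform x < 0 → f (lam • x) = f x)
    (hdecay : ∀ M : ℕ, ∃ CM : ℝ, ∀ x : HypPoint d p q, Qform x = -1 →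
      ‖f x‖ ≤ CM * (1 + normE x) ^ (-((d * p + d * q + 2 * (d - 1) : ℕ) : ℝ) / 2) *
        (1 + Real.log (1 + normE x ^ 2)) ^ (-(M : ℝ))) :
    ∀ M : ℕ, ∃ CM' : ℝ, ∀ t : ℝ × ℝ × ℝ, t.1 ^ 2 - t.2.1 ^ 2 - t.2.2 ^ 2 = -1 →
      ‖Gf f t‖ ≤ CM' * (t.2.1 ^ 2 + t.2.2 ^ 2) ^ (-((d * (q - p) : ℕ) : ℝ) / 4) *
        (1 + Real.log (t.2.1 ^ 2 + t.2.2 ^ 2)) ^ (-(M : ℝ)) := by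
  have hd1 : 1 ≤ d := by rcases hd with h | h | h <;> omega
  intro M
  obtain ⟨CM, hCM⟩ := hdecay M
  set C0 : ℝ := max CM 0 with hC0def
  have hC0 : 0 ≤ C0 := le_max_right _ _
  set n1 : ℕ := d - 1 with hn1def
  set n2 : ℕ := d * p with hn2def
  set m : ℕ := d * (q - p) with hmdef
  set N : ℕ := d * p + d * q + 2 * (d - 1) with hNdef
  set r1 : ℝ := (N : ℝ) / 2 with hr1def
  set r2 : ℝ := r1 - n1 with hr2def
  have hcastm : (m : ℝ) = (d : ℝ) * q - (d : ℝ) * p := by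
    rw [hmdef, Nat.mul_sub]
    have : d * p ≤ d * q := Nat.mul_le_mul_left d hpq.le
    push_cast [this]
    ring
  have hcastn1 : (n1 : ℝ) = (d : ℝ) - 1 := by
    rw [hn1def]; push_cast [hd1]; ring
  have hcastN : (N : ℝ) = (d : ℝ) * p + (d : ℝ) * q + 2 * ((d : ℝ) - 1) := by
    rw [hNdef]; push_cast [hd1]; ring
  have hdq : (d : ℝ) * p < (d : ℝ) * q := by
    have hd1'' : (1:ℝ) ≤ (d:ℝ) := by exact_mod_cast hd1
    have hq : (p : ℝ) < q := by exact_mod_cast hpq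
    nlinarith
  have hd1' : (1 : ℝ) ≤ (d : ℝ) := by exact_mod_cast hd1
  have hp0 : (0 : ℝ) ≤ (d : ℝ) * p := by positivity
  have hr1n : (n1 : ℝ) < r1 := by
    rw [hcastn1, hr1def, hcastN]; nlinarith
  have hr2n : (n2 : ℝ) < r2 := by
    rw [hr2def, hr1def, hcastN, hcastn1, hn2def]
    push_cast
    nlinarith
  set I1 : ℝ := ∫ z : Fin n1 → ℝ, ((1 : ℝ) + ∑ i, z i ^ 2) ^ (-r1 / 2) with hI1def
  set I2 : ℝ := ∫ z : Fin n2 → ℝ, ((1 : ℝ) + ∑ i, z i ^ 2) ^ (-r2 / 2) with hI2def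
  have hI1nn : 0 ≤ I1 := integral_nonneg fun z => Real.rpow_nonneg
    (by have := aux_sum_nonneg z; positivity) _
  have hI2nn : 0 ≤ I2 := integral_nonneg fun z => Real.rpow_nonneg
    (by have := aux_sum_nonneg z; positivity) _
  set σT : ℝ := (((volume : Measure (EuclideanSpace ℝ (Fin m))).toSphere) Set.univ).toReal
    with hσdef
  refine ⟨σT * C0 * I1 * I2, ?_⟩
  intro t ht
  set s : ℝ := t.2.1 ^ 2 + t.2.2 ^ 2 with hsdef
  have hs1 : 1 ≤ s := by nlinarith [sq_nonneg t.1]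
  have hs0 : 0 < s := by linarith
  set L : ℝ := 1 + Real.log s with hLdef
  have hL : 0 < L := by
    have := Real.log_nonneg hs1
    rw [hLdef]; linarith
  have hLM : (0:ℝ) ≤ L ^ (-(M:ℝ)) := Real.rpow_nonneg hL.le _
  -- pointwise bound
  have hpt : ∀ (vb : Metric.sphere (0 : EuclideanSpace ℝ (Fin m)) 1)
      (u : Fin n2 → ℝ) (wb : Fin n1 → ℝ),
      ‖f (t.1, wb, u, -u,
        fun i => t.2.1 * (vb : EuclideanSpace ℝ (Fin m)) i, wb, t.2.2)‖ ≤
      C0 * L ^ (-(M:ℝ)) * ((s + ∑ i, u i ^ 2 + ∑ i, wb i ^ 2) ^ (-r1 / 2)) := by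
    intro vb u wb
    have hU : (0:ℝ) ≤ ∑ i, u i ^ 2 := aux_sum_nonneg u
    have hW : (0:ℝ) ≤ ∑ i, wb i ^ 2 := aux_sum_nonneg wb
    have hv : ∑ i, ((vb : EuclideanSpace ℝ (Fin m)) i) ^ 2 = 1 := by
      have h1 : ‖(vb : EuclideanSpace ℝ (Fin m))‖ = 1 := by
        simpa using mem_sphere_zero_iff_norm.mp vb.2
      have h2 : Real.sqrt (∑ i, ‖(vb : EuclideanSpace ℝ (Fin m)) i‖ ^ 2) = 1 := by
        rw [← EuclideanSpace.norm_eq]; exact h1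
      have h3 := Real.sqrt_eq_one.mp h2
      simpa [Real.norm_eq_abs, sq_abs] using h3
    have hy : (∑ i, (t.2.1 * (vb : EuclideanSpace ℝ (Fin m)) i) ^ 2) = t.2.1 ^ 2 := by
      simp only [mul_pow, ← Finset.mul_sum, hv, mul_one]
    have hneg : (∑ i, ((-u) i) ^ 2) = ∑ i, u i ^ 2 := by simp
    have hQ : Qform ((t.1, wb, u, -u,
        fun i => t.2.1 * (vb : EuclideanSpace ℝ (Fin m)) i, wb, t.2.2) : HypPoint d p q)
        = -1 := by
      simp only [Qform]
      rw [hneg, hy]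
      linear_combination ht
    have hT0 : (0:ℝ) ≤ t.1 ^ 2 + (∑ i, wb i ^ 2) + (∑ i, u i ^ 2) + (∑ i, u i ^ 2) +
        t.2.1 ^ 2 + (∑ i, wb i ^ 2) + t.2.2 ^ 2 := by positivity
    have hnxsq : normE ((t.1, wb, u, -u,
        fun i => t.2.1 * (vb : EuclideanSpace ℝ (Fin m)) i, wb, t.2.2) : HypPoint d p q) ^ 2
        = 2 * s - 1 + 2 * (∑ i, u i ^ 2) + 2 * (∑ i, wb i ^ 2) := by
      rw [normE, hneg, hy, Real.sq_sqrt hT0, hsdef]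
      linear_combination ht
    set x : HypPoint d p q := ((t.1, wb, u, -u,
        fun i => t.2.1 * (vb : EuclideanSpace ℝ (Fin m)) i, wb, t.2.2) : HypPoint d p q)
      with hxdef
    set U : ℝ := ∑ i, u i ^ 2
    set W : ℝ := ∑ i, wb i ^ 2
    have hnx0 : 0 ≤ normE x := Real.sqrt_nonneg _
    have hsum1 : (1:ℝ) ≤ s + U + W := by linarith
    have hsum0 : (0:ℝ) < s + U + W := by linarith
    -- bound A
    have hbA : (1 + normE x) ^ (-(N : ℝ) / 2) ≤ (s + U + W) ^ (-r1 / 2) := by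
      have hsq : s + U + W ≤ (1 + normE x) ^ 2 := by nlinarith [hnxsq, hnx0]
      have hb : Real.sqrt (s + U + W) ≤ 1 + normE x := by
        rw [show (1 + normE x) = Real.sqrt ((1 + normE x) ^ 2) by
          rw [Real.sqrt_sq (by linarith)]]
        exact Real.sqrt_le_sqrt hsq
      have hexp : -(N : ℝ) / 2 ≤ 0 := by
        have : (0:ℝ) ≤ (N : ℝ) := Nat.cast_nonneg N
        linarith
      have h1 : (1 + normE x) ^ (-(N : ℝ) / 2) ≤ (Real.sqrt (s + U + W)) ^ (-(N : ℝ) / 2) :=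
        Real.rpow_le_rpow_of_nonpos (Real.sqrt_pos.mpr hsum0) hb hexp
      have h2 : (Real.sqrt (s + U + W)) ^ (-(N : ℝ) / 2) = (s + U + W) ^ (-r1 / 2) := by
        rw [Real.sqrt_eq_rpow, ← Real.rpow_mul hsum0.le]
        congr 1
        rw [hr1def]; ring
      exact h1.trans (le_of_eq h2)
    -- bound B
    have hlog0 : (0:ℝ) ≤ Real.log (1 + normE x ^ 2) := by
      apply Real.log_nonneg; nlinarith [hnxsq]
    have hbB : (1 + Real.log (1 + normE x ^ 2)) ^ (-(M:ℝ)) ≤ L ^ (-(M:ℝ)) := by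
      have hslog : Real.log s ≤ Real.log (1 + normE x ^ 2) := by
        apply Real.log_le_log hs0; nlinarith [hnxsq]
      apply Real.rpow_le_rpow_of_nonpos hL (by rw [hLdef]; linarith)
        (neg_nonpos.mpr (Nat.cast_nonneg M))
    have hCM0 : CM ≤ C0 := le_max_left _ _
    have h0A : (0:ℝ) ≤ (1 + normE x) ^ (-(N : ℝ) / 2) := Real.rpow_nonneg (by linarith) _
    have h0B : (0:ℝ) ≤ (1 + Real.log (1 + normE x ^ 2)) ^ (-(M:ℝ)) :=
      Real.rpow_nonneg (by linarith) _
    calc ‖f x‖ ≤ CM * (1 + normE x) ^ (-(N : ℝ) / 2) *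
          (1 + Real.log (1 + normE x ^ 2)) ^ (-(M:ℝ)) := hCM x hQ
      _ ≤ (C0 * ((s + U + W) ^ (-r1 / 2))) * (L ^ (-(M:ℝ))) := by
          apply mul_le_mul (mul_le_mul hCM0 hbA h0A hC0) hbB h0B
          exact mul_nonneg hC0 (Real.rpow_nonneg hsum0.le _)
      _ = C0 * L ^ (-(M:ℝ)) * ((s + U + W) ^ (-r1 / 2)) := by ring
  -- level 1: integrate over wb
  have hbound1 : ∀ (vb : Metric.sphere (0 : EuclideanSpace ℝ (Fin m)) 1) (u : Fin n2 → ℝ),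
      ‖∫ wb : Fin n1 → ℝ, f (t.1, wb, u, -u,
        fun i => t.2.1 * (vb : EuclideanSpace ℝ (Fin m)) i, wb, t.2.2)‖ ≤
      C0 * L ^ (-(M:ℝ)) * I1 * ((s + ∑ i, u i ^ 2) ^ (-r2 / 2)) := by
    intro vb u
    set U : ℝ := ∑ i, u i ^ 2 with hUdef
    have hU : 0 ≤ U := aux_sum_nonneg u
    have hsU : (0:ℝ) < s + U := by linarith
    calc ‖∫ wb : Fin n1 → ℝ, f (t.1, wb, u, -u,
          fun i => t.2.1 * (vb : EuclideanSpace ℝ (Fin m)) i, wb, t.2.2)‖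
        ≤ ∫ wb : Fin n1 → ℝ, ‖f (t.1, wb, u, -u,
          fun i => t.2.1 * (vb : EuclideanSpace ℝ (Fin m)) i, wb, t.2.2)‖ :=
          norm_integral_le_integral_norm _
      _ ≤ ∫ wb : Fin n1 → ℝ,
          C0 * L ^ (-(M:ℝ)) * ((s + U + ∑ i, wb i ^ 2) ^ (-r1 / 2)) := by
          apply integral_mono_of_nonneg (Filter.Eventually.of_forall fun wb => norm_nonneg _)
            ((aux_integrable n1 r1 hr1n (s + U) hsU).const_mul (C0 * L ^ (-(M:ℝ))))
          exact Filter.Eventually.of_forall fun wb => by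
            simpa [add_assoc] using hpt vb u wb
      _ = C0 * L ^ (-(M:ℝ)) * ((s + U) ^ (((n1:ℝ) - r1) / 2) * I1) := by
          rw [integral_const_mul, aux_scale n1 r1 (s + U) hsU]
      _ = C0 * L ^ (-(M:ℝ)) * I1 * ((s + U) ^ (-r2 / 2)) := by
          rw [show ((n1:ℝ) - r1) / 2 = -r2 / 2 by rw [hr2def]; ring]; ring
  -- level 2: integrate over u
  have hbound2 : ∀ (vb : Metric.sphere (0 : EuclideanSpace ℝ (Fin m)) 1),
      ‖∫ u : Fin n2 → ℝ, ∫ wb : Fin n1 → ℝ, f (t.1, wb, u, -u,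
        fun i => t.2.1 * (vb : EuclideanSpace ℝ (Fin m)) i, wb, t.2.2)‖ ≤
      C0 * L ^ (-(M:ℝ)) * I1 * (s ^ (((n2:ℝ) - r2) / 2) * I2) := by
    intro vb
    calc ‖∫ u : Fin n2 → ℝ, ∫ wb : Fin n1 → ℝ, f (t.1, wb, u, -u,
          fun i => t.2.1 * (vb : EuclideanSpace ℝ (Fin m)) i, wb, t.2.2)‖
        ≤ ∫ u : Fin n2 → ℝ, ‖∫ wb : Fin n1 → ℝ, f (t.1, wb, u, -u,
          fun i => t.2.1 * (vb : EuclideanSpace ℝ (Fin m)) i, wb, t.2.2)‖ :=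
          norm_integral_le_integral_norm _
      _ ≤ ∫ u : Fin n2 → ℝ,
          C0 * L ^ (-(M:ℝ)) * I1 * ((s + ∑ i, u i ^ 2) ^ (-r2 / 2)) := by
          apply integral_mono_of_nonneg (Filter.Eventually.of_forall fun u => norm_nonneg _)
            ((aux_integrable n2 r2 hr2n s hs0).const_mul (C0 * L ^ (-(M:ℝ)) * I1))
          exact Filter.Eventually.of_forall fun u => hbound1 vb u
      _ = C0 * L ^ (-(M:ℝ)) * I1 * (s ^ (((n2:ℝ) - r2) / 2) * I2) := by
          rw [integral_const_mul, aux_scale n2 r2 s hs0]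
  -- level 3: integrate over the sphere
  have hGf : ‖Gf f t‖ ≤
      C0 * L ^ (-(M:ℝ)) * I1 * (s ^ (((n2:ℝ) - r2) / 2) * I2) * σT := by
    rw [Gf]
    exact norm_integral_le_of_norm_le_const
      (Filter.Eventually.of_forall fun vb => hbound2 vb)
  have hexp2 : ((n2:ℝ) - r2) / 2 = -(m:ℝ) / 4 := by
    rw [hr2def, hr1def, hcastN, hcastn1, hcastm, hn2def]
    push_cast
    ring
  calc ‖Gf f t‖ ≤ C0 * L ^ (-(M:ℝ)) * I1 * (s ^ (((n2:ℝ) - r2) / 2) * I2) * σT := hGf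
    _ = σT * C0 * I1 * I2 * s ^ (-(m:ℝ) / 4) * L ^ (-(M:ℝ)) := by rw [hexp2]; ring
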